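/- For every integer m ≥ 1 there exist reals α_1, …, α_6 ∈ (0,1), a complex Hilbert space H with dim H = 2m + 1, and orthogonal projections P_1, …, P_6 on H with P_1 ≤ P_5, P_2 ≤ P_5, P_3 ≤ P_6, P_4 ≤ P_6 (a Hilbert representation of the poset a_4), such that α_1P_1 + ⋯ + α_6P_6 = I, the family (P_1, …, P_6) is irreducible, every P_i is different from 0 and from I, and P_1 ≠ P_5, P_2 ≠ P_5, P_3 ≠ P_6, P_4 ≠ P_6 (i.e., the representation is essential). -/

import Mathlib

open Finset
open scoped InnerProductSpace ComplexConjugate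

namespace Stmt17

noncomputable def blkF (m off : ℕ) (a b : ℕ → ℝ) (X : ℕ → ℂ) : ℕ → ℂ := fun k =>
  if off ≤ k ∧ (k - off) % 2 = 0 ∧ k - off < 2*m then
    ((a ((k-off)/2) : ℝ) : ℂ) * (((a ((k-off)/2) : ℝ) : ℂ) * X k + ((b ((k-off)/2) : ℝ) : ℂ) * X (k+1))
  else if off + 1 ≤ k ∧ (k - off) % 2 = 1 ∧ k - off < 2*m then
    ((b ((k-off-1)/2) : ℝ) : ℂ) * (((a ((k-off-1)/2) : ℝ) : ℂ) * X (k-1) + ((b ((k-off-1)/2) : ℝ) : ℂ) * X k)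
  else 0

lemma blkF_eval1 {m off k j : ℕ} (a b : ℕ → ℝ) (X : ℕ → ℂ)
    (h1 : off ≤ k) (h2 : k - off = 2*j) (h3 : j < m) :
    blkF m off a b X k = ((a j : ℝ) : ℂ) * (((a j : ℝ) : ℂ) * X k + ((b j : ℝ) : ℂ) * X (k+1)) := by
  have hj : (k - off)/2 = j := by omega
  rw [blkF, if_pos ⟨h1, by omega, by omega⟩, hj]

lemma blkF_eval2 {m off k j : ℕ} (a b : ℕ → ℝ) (X : ℕ → ℂ)
    (h1 : off + 1 ≤ k) (h2 : k - off - 1 = 2*j) (h3 : j < m) :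
    blkF m off a b X k = ((b j : ℝ) : ℂ) * (((a j : ℝ) : ℂ) * X (k-1) + ((b j : ℝ) : ℂ) * X k) := by
  have hj : (k - off - 1)/2 = j := by omega
  rw [blkF, if_neg (by omega), if_pos ⟨h1, by omega, by omega⟩, hj]

lemma blkF_eval0 {m off k : ℕ} (a b : ℕ → ℝ) (X : ℕ → ℂ)
    (h : k < off ∨ 2*m + off ≤ k) :
    blkF m off a b X k = 0 := by
  rw [blkF, if_neg (by omega), if_neg (by omega)]

lemma blkF_congr {m off : ℕ} (a b : ℕ → ℝ) (X Y : ℕ → ℂ)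
    (h : ∀ k, off ≤ k → k < 2*m + off → X k = Y k) :
    blkF m off a b X = blkF m off a b Y := by
  funext k
  rcases Nat.lt_or_ge k off with hk | hk
  · rw [blkF_eval0 a b X (Or.inl hk), blkF_eval0 a b Y (Or.inl hk)]
  rcases Nat.lt_or_ge k (2*m + off) with hk2 | hk2
  · rcases Nat.even_or_odd (k - off) with ⟨j, hj⟩ | ⟨j, hj⟩
    · have hj3 : j < m := by omega
      rw [blkF_eval1 a b X hk (by omega) hj3, blkF_eval1 a b Y hk (by omega) hj3,
        h k hk hk2, h (k+1) (by omega) (by omega)]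
    · have hj3 : j < m := by omega
      rw [blkF_eval2 a b X (by omega) (by omega) hj3, blkF_eval2 a b Y (by omega) (by omega) hj3,
        h (k-1) (by omega) (by omega), h k hk hk2]
  · rw [blkF_eval0 a b X (Or.inr hk2), blkF_eval0 a b Y (Or.inr hk2)]

lemma blkF_idem {m off : ℕ} (a b : ℕ → ℝ) (X : ℕ → ℂ)
    (hab : ∀ j, j < m → (a j)^2 + (b j)^2 = 1) :
    blkF m off a b (blkF m off a b X) = blkF m off a b X := by
  funext k
  rcases Nat.lt_or_ge k off with hk | hk
  · rw [blkF_eval0 a b _ (Or.inl hk), blkF_eval0 a b _ (Or.inl hk)]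
  rcases Nat.lt_or_ge k (2*m + off) with hk2 | hk2
  · rcases Nat.even_or_odd (k - off) with ⟨j, hj⟩ | ⟨j, hj⟩
    · have hj3 : j < m := by omega
      have e1 : blkF m off a b X k
          = ((a j : ℝ) : ℂ) * (((a j : ℝ) : ℂ) * X k + ((b j : ℝ) : ℂ) * X (k+1)) :=
        blkF_eval1 a b X hk (by omega) hj3
      have e2 : blkF m off a b X (k+1)
          = ((b j : ℝ) : ℂ) * (((a j : ℝ) : ℂ) * X k + ((b j : ℝ) : ℂ) * X (k+1)) := by
        have := blkF_eval2 a b X (k := k+1) (j := j) (by omega) (show k+1-off-1 = 2*j by omega) hj3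
        simpa [Nat.add_sub_cancel] using this
      rw [blkF_eval1 a b _ hk (by omega) hj3, e1, e2]
      have hsq : ((a j : ℝ) : ℂ)^2 + ((b j : ℝ) : ℂ)^2 = 1 := by
        have h := hab j hj3

        exact_mod_cast congrArg (Complex.ofReal ·) h
      linear_combination (((a j : ℝ) : ℂ) * (((a j : ℝ) : ℂ) * X k + ((b j : ℝ) : ℂ) * X (k+1))) * hsq
    · have hj3 : j < m := by omega
      have e1 : blkF m off a b X (k-1)
          = ((a j : ℝ) : ℂ) * (((a j : ℝ) : ℂ) * X (k-1) + ((b j : ℝ) : ℂ) * X (k-1+1)) :=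
        blkF_eval1 a b X (by omega) (by omega) hj3
      have hkk : k - 1 + 1 = k := by omega
      rw [hkk] at e1
      have e2 : blkF m off a b X k
          = ((b j : ℝ) : ℂ) * (((a j : ℝ) : ℂ) * X (k-1) + ((b j : ℝ) : ℂ) * X k) :=
        blkF_eval2 a b X (by omega) (by omega) hj3
      rw [blkF_eval2 a b _ (by omega) (by omega) hj3, e1, e2]
      have hsq : ((a j : ℝ) : ℂ)^2 + ((b j : ℝ) : ℂ)^2 = 1 := by
        have h := hab j hj3
        exact_mod_cast congrArg (Complex.ofReal ·) h
      linear_combination (((b j : ℝ) : ℂ) * (((a j : ℝ) : ℂ) * X (k-1) + ((b j : ℝ) : ℂ) * X k)) * hsq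
  · rw [blkF_eval0 a b _ (Or.inr hk2), blkF_eval0 a b _ (Or.inr hk2)]

/-- extend a Euclidean vector to an ℕ-indexed sequence by zero -/
def Xv (m : ℕ) (x : EuclideanSpace ℂ (Fin (2*m+1))) : ℕ → ℂ :=
  fun k => if h : k < 2*m+1 then x ⟨k, h⟩ else 0

lemma Xv_add (m : ℕ) (x y : EuclideanSpace ℂ (Fin (2*m+1))) :
    Xv m (x + y) = Xv m x + Xv m y := by
  funext k; simp only [Xv, Pi.add_apply]; split_ifs <;> simp
lemma Xv_smul (m : ℕ) (c : ℂ) (x : EuclideanSpace ℂ (Fin (2*m+1))) :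
    Xv m (c • x) = c • Xv m x := by
  funext k; simp only [Xv, Pi.smul_apply]; split_ifs <;> simp
lemma Xv_lt (m : ℕ) (x : EuclideanSpace ℂ (Fin (2*m+1))) (i : Fin (2*m+1)) :
    Xv m x i.val = x i := by
  simp only [Xv, i.isLt, dif_pos]
lemma Xv_ge (m : ℕ) (x : EuclideanSpace ℂ (Fin (2*m+1))) (k : ℕ) (h : 2*m+1 ≤ k) :
    Xv m x k = 0 := by
  simp only [Xv]; rw [dif_neg (by omega)]

/-- build a CLM from a linear formula on sequences -/
noncomputable def opOf (m : ℕ) (F : (ℕ → ℂ) → ℕ → ℂ)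
    (hadd : ∀ X Y, F (X + Y) = F X + F Y)
    (hsmul : ∀ (c : ℂ) X, F (c • X) = c • F X) :
    EuclideanSpace ℂ (Fin (2*m+1)) →L[ℂ] EuclideanSpace ℂ (Fin (2*m+1)) :=
  LinearMap.toContinuousLinearMap
    { toFun := fun x => (WithLp.toLp 2 (fun i : Fin (2*m+1) => F (Xv m x) i.val) : EuclideanSpace ℂ (Fin (2*m+1)))
      map_add' := by
        intro x y
        refine PiLp.ext fun i => ?_
        show F (Xv m (x+y)) i.val = F (Xv m x) i.val + F (Xv m y) i.val
        rw [Xv_add, hadd]; rfl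
      map_smul' := by
        intro c x
        refine PiLp.ext fun i => ?_
        show F (Xv m (c • x)) i.val = c * F (Xv m x) i.val
        rw [Xv_smul, hsmul]; rfl }

lemma opOf_apply (m : ℕ) (F : (ℕ → ℂ) → ℕ → ℂ) (hadd hsmul) (x : EuclideanSpace ℂ (Fin (2*m+1)))
    (i : Fin (2*m+1)) : (opOf m F hadd hsmul) x i = F (Xv m x) i.val := rfl

lemma Xv_opOf (m : ℕ) (F : (ℕ → ℂ) → ℕ → ℂ) (hadd hsmul)
    (hvan : ∀ x k, 2*m+1 ≤ k → F (Xv m x) k = 0)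
    (x : EuclideanSpace ℂ (Fin (2*m+1))) :
    Xv m ((opOf m F hadd hsmul) x) = F (Xv m x) := by
  funext k
  by_cases h : k < 2*m+1
  · have : Xv m ((opOf m F hadd hsmul) x) k = (opOf m F hadd hsmul) x ⟨k, h⟩ := by
      simp only [Xv, dif_pos h]
    rw [this, opOf_apply]
  · rw [Xv_ge m _ k (by omega), hvan x k (by omega)]

noncomputable def cA (m j : ℕ) : ℝ := Real.sqrt ((4*(m:ℝ) - 1 - 4*j)/(4*m))
noncomputable def sA (m j : ℕ) : ℝ := Real.sqrt ((1 + 4*(j:ℝ))/(4*m))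
noncomputable def cB (m j : ℕ) : ℝ := Real.sqrt ((4*(m:ℝ) - 3 - 4*j)/(4*m))
noncomputable def sB (m j : ℕ) : ℝ := Real.sqrt ((3 + 4*(j:ℝ))/(4*m))

section coeffs
variable {m j : ℕ} (hm : 1 ≤ m) (hj : j < m)
include hm hj

lemma cA_rad_pos : 0 < (4*(m:ℝ) - 1 - 4*j)/(4*m) := by
  have h1 : (1:ℝ) ≤ m := by exact_mod_cast hm
  have h2 : (j:ℝ) + 1 ≤ m := by exact_mod_cast hj
  apply div_pos <;> nlinarith
lemma sA_rad_pos : 0 < (1 + 4*(j:ℝ))/(4*m) := by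
  have h1 : (1:ℝ) ≤ m := by exact_mod_cast hm
  apply div_pos <;> nlinarith [show (0:ℝ) ≤ j from j.cast_nonneg]
lemma cB_rad_pos : 0 < (4*(m:ℝ) - 3 - 4*j)/(4*m) := by
  have h1 : (1:ℝ) ≤ m := by exact_mod_cast hm
  have h2 : (j:ℝ) + 1 ≤ m := by exact_mod_cast hj
  apply div_pos <;> nlinarith
lemma sB_rad_pos : 0 < (3 + 4*(j:ℝ))/(4*m) := by
  have h1 : (1:ℝ) ≤ m := by exact_mod_cast hm
  have h0 : (0:ℝ) ≤ j := j.cast_nonneg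
  apply div_pos <;> nlinarith

lemma cA_sq : (cA m j)^2 = (4*(m:ℝ) - 1 - 4*j)/(4*m) := by
  rw [cA, Real.sq_sqrt (le_of_lt (cA_rad_pos hm hj))]
lemma sA_sq : (sA m j)^2 = (1 + 4*(j:ℝ))/(4*m) := by
  rw [sA, Real.sq_sqrt (le_of_lt (sA_rad_pos hm hj))]
lemma cB_sq : (cB m j)^2 = (4*(m:ℝ) - 3 - 4*j)/(4*m) := by
  rw [cB, Real.sq_sqrt (le_of_lt (cB_rad_pos hm hj))]
lemma sB_sq : (sB m j)^2 = (3 + 4*(j:ℝ))/(4*m) := by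
  rw [sB, Real.sq_sqrt (le_of_lt (sB_rad_pos hm hj))]

lemma cA_pos : 0 < cA m j := Real.sqrt_pos.mpr (cA_rad_pos hm hj)
lemma sA_pos : 0 < sA m j := Real.sqrt_pos.mpr (sA_rad_pos hm hj)
lemma cB_pos : 0 < cB m j := Real.sqrt_pos.mpr (cB_rad_pos hm hj)
lemma sB_pos : 0 < sB m j := Real.sqrt_pos.mpr (sB_rad_pos hm hj)

lemma cAsA_unit : (cA m j)^2 + (sA m j)^2 = 1 := by
  rw [cA_sq hm hj, sA_sq hm hj]
  have h1 : (1:ℝ) ≤ m := by exact_mod_cast hm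
  field_simp
  ring
lemma cBsB_unit : (cB m j)^2 + (sB m j)^2 = 1 := by
  rw [cB_sq hm hj, sB_sq hm hj]
  have h1 : (1:ℝ) ≤ m := by exact_mod_cast hm
  field_simp
  ring
end coeffs

lemma blkF_add (m off : ℕ) (a b : ℕ → ℝ) (X Y : ℕ → ℂ) :
    blkF m off a b (X + Y) = blkF m off a b X + blkF m off a b Y := by
  funext k
  simp only [blkF, Pi.add_apply]
  split_ifs <;> (try simp) <;> ring

lemma blkF_smul (m off : ℕ) (a b : ℕ → ℝ) (c : ℂ) (X : ℕ → ℂ) :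
    blkF m off a b (c • X) = c • blkF m off a b X := by
  funext k
  simp only [blkF, Pi.smul_apply, smul_eq_mul]
  split_ifs <;> (try simp) <;> ring

def bandF (lo hi : ℕ) (X : ℕ → ℂ) : ℕ → ℂ := fun k => if lo ≤ k ∧ k < hi then X k else 0

lemma bandF_add (lo hi : ℕ) (X Y : ℕ → ℂ) :
    bandF lo hi (X + Y) = bandF lo hi X + bandF lo hi Y := by
  funext k; simp only [bandF, Pi.add_apply]; split_ifs <;> simp
lemma bandF_smul (lo hi : ℕ) (c : ℂ) (X : ℕ → ℂ) :
    bandF lo hi (c • X) = c • bandF lo hi X := by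
  funext k; simp only [bandF, Pi.smul_apply, smul_eq_mul]; split_ifs <;> simp

noncomputable def p0 (m : ℕ) := opOf m (blkF m 0 (cA m) (sA m)) (blkF_add _ _ _ _) (blkF_smul _ _ _ _)
noncomputable def p1 (m : ℕ) := opOf m (blkF m 0 (cA m) (fun j => -(sA m j))) (blkF_add _ _ _ _) (blkF_smul _ _ _ _)
noncomputable def p2 (m : ℕ) := opOf m (blkF m 1 (cB m) (sB m)) (blkF_add _ _ _ _) (blkF_smul _ _ _ _)
noncomputable def p3 (m : ℕ) := opOf m (blkF m 1 (cB m) (fun j => -(sB m j))) (blkF_add _ _ _ _) (blkF_smul _ _ _ _)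
noncomputable def p4 (m : ℕ) := opOf m (bandF 0 (2*m)) (bandF_add _ _) (bandF_smul _ _)
noncomputable def p5 (m : ℕ) := opOf m (bandF 1 (2*m+1)) (bandF_add _ _) (bandF_smul _ _)

lemma blkF_van (m off : ℕ) (hoff : off ≤ 1) (a b : ℕ → ℝ) (X : ℕ → ℂ) (k : ℕ) (h : 2*m+1 ≤ k) :
    blkF m off a b X k = 0 := blkF_eval0 a b X (Or.inr (by omega))

lemma Xv_p0 (m : ℕ) (x : EuclideanSpace ℂ (Fin (2*m+1))) :
    Xv m (p0 m x) = blkF m 0 (cA m) (sA m) (Xv m x) :=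
  Xv_opOf m _ _ _ (fun x k h => blkF_van m 0 (by omega) _ _ _ k h) x
lemma Xv_p1 (m : ℕ) (x : EuclideanSpace ℂ (Fin (2*m+1))) :
    Xv m (p1 m x) = blkF m 0 (cA m) (fun j => -(sA m j)) (Xv m x) :=
  Xv_opOf m _ _ _ (fun x k h => blkF_van m 0 (by omega) _ _ _ k h) x
lemma Xv_p2 (m : ℕ) (x : EuclideanSpace ℂ (Fin (2*m+1))) :
    Xv m (p2 m x) = blkF m 1 (cB m) (sB m) (Xv m x) :=
  Xv_opOf m _ _ _ (fun x k h => blkF_van m 1 (by omega) _ _ _ k h) x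
lemma Xv_p3 (m : ℕ) (x : EuclideanSpace ℂ (Fin (2*m+1))) :
    Xv m (p3 m x) = blkF m 1 (cB m) (fun j => -(sB m j)) (Xv m x) :=
  Xv_opOf m _ _ _ (fun x k h => blkF_van m 1 (by omega) _ _ _ k h) x
lemma Xv_p4 (m : ℕ) (x : EuclideanSpace ℂ (Fin (2*m+1))) :
    Xv m (p4 m x) = bandF 0 (2*m) (Xv m x) :=
  Xv_opOf m _ _ _ (fun x k h => by simp only [bandF]; rw [if_neg (by omega)]) x
lemma Xv_p5 (m : ℕ) (x : EuclideanSpace ℂ (Fin (2*m+1))) :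
    Xv m (p5 m x) = bandF 1 (2*m+1) (Xv m x) :=
  Xv_opOf m _ _ _ (fun x k h => by simp only [bandF]; rw [if_neg (by omega)]) x

/-- the family -/
noncomputable def PP (m : ℕ) : Fin 6 → EuclideanSpace ℂ (Fin (2*m+1)) →L[ℂ] EuclideanSpace ℂ (Fin (2*m+1)) :=
  ![p0 m, p1 m, p2 m, p3 m, p4 m, p5 m]

lemma euclid_ext {m : ℕ} {x y : EuclideanSpace ℂ (Fin (2*m+1))}
    (h : ∀ i : Fin (2*m+1), x i = y i) : x = y := PiLp.ext h

lemma inner_eq (m : ℕ) (x y : EuclideanSpace ℂ (Fin (2*m+1))) :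
    ⟪x, y⟫_ℂ = ∑ k ∈ range (2*m+1), conj (Xv m x k) * Xv m y k := by
  rw [← Fin.sum_univ_eq_sum_range (fun k => conj (Xv m x k) * Xv m y k) (2*m+1)]
  simp only [PiLp.inner_apply, RCLike.inner_apply]
  refine Finset.sum_congr rfl fun i _ => ?_
  rw [Xv_lt, Xv_lt, mul_comm]

lemma sum_pair (M : ℕ) (f : ℕ → ℂ) :
    ∑ k ∈ range (2*M), f k = ∑ j ∈ range M, (f (2*j) + f (2*j+1)) := by
  induction M with
  | zero => simp
  | succ M ih =>
    have h2 : 2*(M+1) = (2*M+1)+1 := by ring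
    rw [h2, Finset.sum_range_succ, Finset.sum_range_succ, Finset.sum_range_succ, ih]
    ring

lemma blkF_symm_sum (m off : ℕ) (hoff : off ≤ 1) (a b : ℕ → ℝ) (X Y : ℕ → ℂ) :
    ∑ k ∈ range (2*m+1), conj (blkF m off a b X k) * Y k
      = ∑ k ∈ range (2*m+1), conj (X k) * blkF m off a b Y k := by
  rw [← sub_eq_zero, ← Finset.sum_sub_distrib]
  set g : ℕ → ℂ := fun k => conj (blkF m off a b X k) * Y k - conj (X k) * blkF m off a b Y k with hg
  show ∑ k ∈ range (2*m+1), g k = 0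
  have pair : ∀ j, j < m → g (2*j+off) + g (2*j+off+1) = 0 := by
    intro j hj
    have e1X := blkF_eval1 (m := m) (off := off) (k := 2*j+off) a b X (by omega) (by omega) hj
    have e1Y := blkF_eval1 (m := m) (off := off) (k := 2*j+off) a b Y (by omega) (by omega) hj
    have e2X := blkF_eval2 (m := m) (off := off) (k := 2*j+off+1) a b X (by omega) (by omega) hj
    have e2Y := blkF_eval2 (m := m) (off := off) (k := 2*j+off+1) a b Y (by omega) (by omega) hj
    have hred : 2*j+off+1-1 = 2*j+off := by omega
    rw [hred] at e2X e2Y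
    simp only [hg, e1X, e1Y, e2X, e2Y, map_add, map_mul, Complex.conj_ofReal]
    ring
  rcases Nat.eq_zero_or_pos off with h0 | h1
  · subst h0
    rw [Finset.sum_range_succ, sum_pair]
    have : blkF m 0 a b X (2*m) = 0 := blkF_eval0 a b X (Or.inr (by omega))
    have hY : blkF m 0 a b Y (2*m) = 0 := blkF_eval0 a b Y (Or.inr (by omega))
    have hgz : g (2*m) = 0 := by simp [hg, this, hY]
    rw [hgz, add_zero]
    refine Finset.sum_eq_zero fun j hj => ?_
    have := pair j (Finset.mem_range.mp hj)
    simpa using this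
  · have hoff1 : off = 1 := by omega
    subst hoff1
    rw [Finset.sum_range_succ', sum_pair]
    have hX0 : blkF m 1 a b X 0 = 0 := blkF_eval0 a b X (Or.inl (by omega))
    have hY0 : blkF m 1 a b Y 0 = 0 := blkF_eval0 a b Y (Or.inl (by omega))
    have hgz : g 0 = 0 := by simp [hg, hX0, hY0]
    rw [hgz, add_zero]
    refine Finset.sum_eq_zero fun j hj => ?_
    have := pair j (Finset.mem_range.mp hj)
    have harr : 2*j+1+1 = 2*j+2 := by omega
    simpa [harr] using this

lemma unitA (m : ℕ) : ∀ j, j < m → (cA m j)^2 + (sA m j)^2 = 1 :=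
  fun j hj => cAsA_unit (by omega) hj
lemma unitA' (m : ℕ) : ∀ j, j < m → (cA m j)^2 + (-(sA m j))^2 = 1 := by
  intro j hj; rw [neg_sq]; exact unitA m j hj
lemma unitB (m : ℕ) : ∀ j, j < m → (cB m j)^2 + (sB m j)^2 = 1 :=
  fun j hj => cBsB_unit (by omega) hj
lemma unitB' (m : ℕ) : ∀ j, j < m → (cB m j)^2 + (-(sB m j))^2 = 1 := by
  intro j hj; rw [neg_sq]; exact unitB m j hj

lemma p0_idem (m : ℕ) : p0 m ∘L p0 m = p0 m := by
  refine ContinuousLinearMap.ext fun x => euclid_ext fun i => ?_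
  show blkF m 0 (cA m) (sA m) (Xv m (p0 m x)) i.val = blkF m 0 (cA m) (sA m) (Xv m x) i.val
  rw [Xv_p0, blkF_idem _ _ _ (unitA m)]
lemma p1_idem (m : ℕ) : p1 m ∘L p1 m = p1 m := by
  refine ContinuousLinearMap.ext fun x => euclid_ext fun i => ?_
  show blkF m 0 (cA m) (fun j => -(sA m j)) (Xv m (p1 m x)) i.val = blkF m 0 (cA m) (fun j => -(sA m j)) (Xv m x) i.val
  rw [Xv_p1, blkF_idem _ _ _ (unitA' m)]
lemma p2_idem (m : ℕ) : p2 m ∘L p2 m = p2 m := by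
  refine ContinuousLinearMap.ext fun x => euclid_ext fun i => ?_
  show blkF m 1 (cB m) (sB m) (Xv m (p2 m x)) i.val = blkF m 1 (cB m) (sB m) (Xv m x) i.val
  rw [Xv_p2, blkF_idem _ _ _ (unitB m)]
lemma p3_idem (m : ℕ) : p3 m ∘L p3 m = p3 m := by
  refine ContinuousLinearMap.ext fun x => euclid_ext fun i => ?_
  show blkF m 1 (cB m) (fun j => -(sB m j)) (Xv m (p3 m x)) i.val = blkF m 1 (cB m) (fun j => -(sB m j)) (Xv m x) i.val
  rw [Xv_p3, blkF_idem _ _ _ (unitB' m)]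
lemma p4_idem (m : ℕ) : p4 m ∘L p4 m = p4 m := by
  refine ContinuousLinearMap.ext fun x => euclid_ext fun i => ?_
  show bandF 0 (2*m) (Xv m (p4 m x)) i.val = bandF 0 (2*m) (Xv m x) i.val
  rw [Xv_p4]
  simp only [bandF]
  split_ifs <;> rfl
lemma p5_idem (m : ℕ) : p5 m ∘L p5 m = p5 m := by
  refine ContinuousLinearMap.ext fun x => euclid_ext fun i => ?_
  show bandF 1 (2*m+1) (Xv m (p5 m x)) i.val = bandF 1 (2*m+1) (Xv m x) i.val
  rw [Xv_p5]
  simp only [bandF]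
  split_ifs <;> rfl

lemma p0_p4 (m : ℕ) : p0 m ∘L p4 m = p0 m := by
  refine ContinuousLinearMap.ext fun x => euclid_ext fun i => ?_
  show blkF m 0 (cA m) (sA m) (Xv m (p4 m x)) i.val = blkF m 0 (cA m) (sA m) (Xv m x) i.val
  rw [Xv_p4, blkF_congr (cA m) (sA m) _ _ (fun k hk1 hk2 => by
    simp only [bandF]; rw [if_pos ⟨hk1, by omega⟩])]
lemma p1_p4 (m : ℕ) : p1 m ∘L p4 m = p1 m := by
  refine ContinuousLinearMap.ext fun x => euclid_ext fun i => ?_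
  show blkF m 0 (cA m) (fun j => -(sA m j)) (Xv m (p4 m x)) i.val = blkF m 0 (cA m) (fun j => -(sA m j)) (Xv m x) i.val
  rw [Xv_p4, blkF_congr (cA m) _ _ _ (fun k hk1 hk2 => by
    simp only [bandF]; rw [if_pos ⟨hk1, by omega⟩])]
lemma p2_p5 (m : ℕ) : p2 m ∘L p5 m = p2 m := by
  refine ContinuousLinearMap.ext fun x => euclid_ext fun i => ?_
  show blkF m 1 (cB m) (sB m) (Xv m (p5 m x)) i.val = blkF m 1 (cB m) (sB m) (Xv m x) i.val
  rw [Xv_p5, blkF_congr (cB m) (sB m) _ _ (fun k hk1 hk2 => by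
    simp only [bandF]; rw [if_pos ⟨hk1, by omega⟩])]
lemma p3_p5 (m : ℕ) : p3 m ∘L p5 m = p3 m := by
  refine ContinuousLinearMap.ext fun x => euclid_ext fun i => ?_
  show blkF m 1 (cB m) (fun j => -(sB m j)) (Xv m (p5 m x)) i.val = blkF m 1 (cB m) (fun j => -(sB m j)) (Xv m x) i.val
  rw [Xv_p5, blkF_congr (cB m) _ _ _ (fun k hk1 hk2 => by
    simp only [bandF]; rw [if_pos ⟨hk1, by omega⟩])]

lemma p0_sa (m : ℕ) : IsSelfAdjoint (p0 m) := by
  rw [ContinuousLinearMap.isSelfAdjoint_iff_isSymmetric]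
  intro x y
  rw [inner_eq, inner_eq]
  simp only [ContinuousLinearMap.coe_coe, Xv_p0]
  exact blkF_symm_sum m 0 (by omega) _ _ _ _
lemma p1_sa (m : ℕ) : IsSelfAdjoint (p1 m) := by
  rw [ContinuousLinearMap.isSelfAdjoint_iff_isSymmetric]
  intro x y
  rw [inner_eq, inner_eq]
  simp only [ContinuousLinearMap.coe_coe, Xv_p1]
  exact blkF_symm_sum m 0 (by omega) _ _ _ _
lemma p2_sa (m : ℕ) : IsSelfAdjoint (p2 m) := by
  rw [ContinuousLinearMap.isSelfAdjoint_iff_isSymmetric]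
  intro x y
  rw [inner_eq, inner_eq]
  simp only [ContinuousLinearMap.coe_coe, Xv_p2]
  exact blkF_symm_sum m 1 (by omega) _ _ _ _
lemma p3_sa (m : ℕ) : IsSelfAdjoint (p3 m) := by
  rw [ContinuousLinearMap.isSelfAdjoint_iff_isSymmetric]
  intro x y
  rw [inner_eq, inner_eq]
  simp only [ContinuousLinearMap.coe_coe, Xv_p3]
  exact blkF_symm_sum m 1 (by omega) _ _ _ _
lemma p4_sa (m : ℕ) : IsSelfAdjoint (p4 m) := by
  rw [ContinuousLinearMap.isSelfAdjoint_iff_isSymmetric]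
  intro x y
  rw [inner_eq, inner_eq]
  simp only [ContinuousLinearMap.coe_coe, Xv_p4]
  refine Finset.sum_congr rfl fun k _ => ?_
  simp only [bandF]
  split_ifs <;> simp
lemma p5_sa (m : ℕ) : IsSelfAdjoint (p5 m) := by
  rw [ContinuousLinearMap.isSelfAdjoint_iff_isSymmetric]
  intro x y
  rw [inner_eq, inner_eq]
  simp only [ContinuousLinearMap.coe_coe, Xv_p5]
  refine Finset.sum_congr rfl fun k _ => ?_
  simp only [bandF]
  split_ifs <;> simp

lemma sum_id (m : ℕ) (hm : 1 ≤ m) :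
    ((1/2 : ℝ) : ℂ) • p0 m + ((1/2 : ℝ) : ℂ) • p1 m + ((1/2 : ℝ) : ℂ) • p2 m
      + ((1/2 : ℝ) : ℂ) • p3 m + ((1/(4*(m:ℝ)) : ℝ) : ℂ) • p4 m
      + ((1/(4*(m:ℝ)) : ℝ) : ℂ) • p5 m = 1 := by
  refine ContinuousLinearMap.ext fun x => euclid_ext fun i => ?_
  have hmC : (m:ℂ) ≠ 0 := Nat.cast_ne_zero.mpr (by omega)
  have hm4 : (4:ℂ)*m ≠ 0 := by
    intro h
    apply hmC
    have h4 : (4:ℂ) ≠ 0 := by norm_num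
    exact (mul_eq_zero.mp h).resolve_left h4
  have hinv : ((4:ℂ)*m) * ((4:ℂ)*m)⁻¹ = 1 := mul_inv_cancel₀ hm4
  simp only [ContinuousLinearMap.add_apply, ContinuousLinearMap.smul_apply,
    ContinuousLinearMap.one_apply, PiLp.add_apply, PiLp.smul_apply, smul_eq_mul]
  have e0 : p0 m x i = blkF m 0 (cA m) (sA m) (Xv m x) i.val := rfl
  have e1 : p1 m x i = blkF m 0 (cA m) (fun j => -(sA m j)) (Xv m x) i.val := rfl
  have e2 : p2 m x i = blkF m 1 (cB m) (sB m) (Xv m x) i.val := rfl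
  have e3 : p3 m x i = blkF m 1 (cB m) (fun j => -(sB m j)) (Xv m x) i.val := rfl
  have e4 : p4 m x i = bandF 0 (2*m) (Xv m x) i.val := rfl
  have e5 : p5 m x i = bandF 1 (2*m+1) (Xv m x) i.val := rfl
  rw [e0, e1, e2, e3, e4, e5, ← Xv_lt m x i]
  set X := Xv m x with hX
  set k := i.val with hkdef
  clear_value X k
  have hk : k < 2*m+1 := hkdef ▸ i.isLt
  rcases Nat.eq_zero_or_pos k with hk0 | hkpos
  · -- k = 0
    subst hk0
    have hA := congrArg Complex.ofReal (cA_sq (m := m) (j := 0) hm (by omega))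
    push_cast at hA
    rw [blkF_eval1 (j := 0) _ _ X (by omega) (by omega) (by omega),
      blkF_eval1 (j := 0) _ _ X (by omega) (by omega) (by omega),
      blkF_eval0 _ _ X (Or.inl (by omega)), blkF_eval0 _ _ X (Or.inl (by omega))]
    simp only [bandF]
    rw [if_pos (by omega : 0 ≤ 0 ∧ 0 < 2*m), if_neg (by omega)]
    push_cast
    ring_nf
    rw [hA]
    field_simp
    ring
  rcases Nat.lt_or_ge k (2*m) with hk2 | hk2
  · rcases Nat.even_or_odd k with ⟨j, hj⟩ | ⟨j, hj⟩
    · -- k even, 1 ≤ k < 2m, k = 2j, 1 ≤ j < m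
      have hj1 : 1 ≤ j := by omega
      have hjm : j < m := by omega
      have hA := congrArg Complex.ofReal (cA_sq (m := m) (j := j) hm hjm)
      have hF := congrArg Complex.ofReal (sB_sq (m := m) (j := j-1) hm (by omega))
      push_cast [Nat.cast_sub hj1] at hA hF
      rw [blkF_eval1 (j := j) _ _ X (by omega) (by omega) hjm,
        blkF_eval1 (j := j) _ _ X (by omega) (by omega) hjm,
        blkF_eval2 (j := j-1) _ _ X (by omega) (by omega) (by omega),
        blkF_eval2 (j := j-1) _ _ X (by omega) (by omega) (by omega)]
      simp only [bandF]
      rw [if_pos (by omega : 0 ≤ k ∧ k < 2*m), if_pos (by omega : 1 ≤ k ∧ k < 2*m+1)]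
      push_cast [Nat.cast_sub hj1]
      ring_nf
      rw [hA, hF]
      field_simp
      ring
    · -- k odd, k = 2j+1, j < m
      have hjm : j < m := by omega
      have hB := congrArg Complex.ofReal (sA_sq (m := m) (j := j) hm hjm)
      have hD := congrArg Complex.ofReal (cB_sq (m := m) (j := j) hm hjm)
      push_cast at hB hD
      rw [blkF_eval2 (j := j) _ _ X (by omega) (by omega) hjm,
        blkF_eval2 (j := j) _ _ X (by omega) (by omega) hjm,
        blkF_eval1 (j := j) _ _ X (by omega) (by omega) hjm,
        blkF_eval1 (j := j) _ _ X (by omega) (by omega) hjm]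
      simp only [bandF]
      rw [if_pos (by omega : 0 ≤ k ∧ k < 2*m), if_pos (by omega : 1 ≤ k ∧ k < 2*m+1)]
      push_cast
      ring_nf
      rw [hB, hD]
      field_simp
      ring
  · -- k = 2m
    have hk2m : k = 2*m := by omega
    subst hk2m
    have hF := congrArg Complex.ofReal (sB_sq (m := m) (j := m-1) hm (by omega))
    push_cast [Nat.cast_sub hm] at hF
    rw [blkF_eval0 _ _ X (Or.inr (by omega)), blkF_eval0 _ _ X (Or.inr (by omega)),
      blkF_eval2 (j := m-1) _ _ X (by omega) (by omega) (by omega),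
      blkF_eval2 (j := m-1) _ _ X (by omega) (by omega) (by omega)]
    simp only [bandF]
    rw [if_neg (by omega), if_pos (by omega : 1 ≤ 2*m ∧ 2*m < 2*m+1)]
    push_cast [Nat.cast_sub hm]
    ring_nf
    rw [hF]
    field_simp
    ring

def dvN (m k : ℕ) : ℕ := if k = 2*m then 0 else if k % 2 = 0 then 4*m - 1 - 2*k else 2*k - 1

lemma dvN_inj (m : ℕ) {k1 k2 : ℕ} (h1 : k1 ≤ 2*m) (h2 : k2 ≤ 2*m)
    (h : dvN m k1 = dvN m k2) : k1 = k2 := by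
  unfold dvN at h
  split_ifs at h <;> omega

lemma diag_eval (m : ℕ) (hm : 1 ≤ m) (x : EuclideanSpace ℂ (Fin (2*m+1))) (i : Fin (2*m+1)) :
    (2*(m:ℂ)) * (p0 m x i + p1 m x i) = ((dvN m i.val : ℕ) : ℂ) * x i := by
  have hmC : (m:ℂ) ≠ 0 := Nat.cast_ne_zero.mpr (by omega)
  have e0 : p0 m x i = blkF m 0 (cA m) (sA m) (Xv m x) i.val := rfl
  have e1 : p1 m x i = blkF m 0 (cA m) (fun j => -(sA m j)) (Xv m x) i.val := rfl
  rw [e0, e1, ← Xv_lt m x i]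
  set X := Xv m x with hX
  set k := i.val with hkdef
  clear_value X k
  have hk : k < 2*m+1 := hkdef ▸ i.isLt
  rcases Nat.lt_or_ge k (2*m) with hk2 | hk2
  · rcases Nat.even_or_odd k with ⟨j, hj⟩ | ⟨j, hj⟩
    · have hjm : j < m := by omega
      have hA := congrArg Complex.ofReal (cA_sq (m := m) (j := j) hm hjm)
      push_cast at hA
      rw [blkF_eval1 (j := j) _ _ X (by omega) (by omega) hjm,
        blkF_eval1 (j := j) _ _ X (by omega) (by omega) hjm]
      have hdv : dvN m k = 4*m - 1 - 2*k := by unfold dvN; rw [if_neg (by omega), if_pos (by omega)]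
      have h1 : 4*m - 1 - 2*k = 4*m - (1 + 2*k) := by omega
      rw [hdv, h1]
      have hkC : (k:ℂ) = 2*(j:ℂ) := by push_cast [hj]; ring
      push_cast [Nat.cast_sub (show 1 + 2*k ≤ 4*m by omega)]
      ring_nf
      rw [hA]
      field_simp
      rw [hkC]
      ring
    · have hjm : j < m := by omega
      have hB := congrArg Complex.ofReal (sA_sq (m := m) (j := j) hm hjm)
      push_cast at hB
      rw [blkF_eval2 (j := j) _ _ X (by omega) (by omega) hjm,
        blkF_eval2 (j := j) _ _ X (by omega) (by omega) hjm]
      have hdv : dvN m k = 2*k - 1 := by unfold dvN; rw [if_neg (by omega), if_neg (by omega)]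
      rw [hdv]
      have hkC : (k:ℂ) = 2*(j:ℂ)+1 := by push_cast [hj]; ring
      push_cast [Nat.cast_sub (show 1 ≤ 2*k by omega)]
      ring_nf
      rw [hB]
      field_simp
      rw [hkC]
      ring
  · have hk2m : k = 2*m := by omega
    subst hk2m
    rw [blkF_eval0 _ _ X (Or.inr (by omega)), blkF_eval0 _ _ X (Or.inr (by omega))]
    have hdv : dvN m (2*m) = 0 := by unfold dvN; rw [if_pos rfl]
    rw [hdv]
    push_cast
    ring

section irr
variable (m : ℕ) (hm : 1 ≤ m) (K : Submodule ℂ (EuclideanSpace ℂ (Fin (2*m+1))))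
variable (hK0 : ∀ x ∈ K, p0 m x ∈ K) (hK1 : ∀ x ∈ K, p1 m x ∈ K) (hK2 : ∀ x ∈ K, p2 m x ∈ K)

open Classical in
include hm hK0 hK1 in
lemma extract : ∀ (c : ℕ) (x : EuclideanSpace ℂ (Fin (2*m+1))), x ∈ K →
    (Finset.univ.filter (fun i => x i ≠ 0)).card ≤ c →
    ∀ (k : Fin (2*m+1)), x k ≠ 0 → EuclideanSpace.single k (1:ℂ) ∈ K := by
  intro c
  induction c with
  | zero =>
    intro x hx hc k hk
    exfalso
    have : k ∈ Finset.univ.filter (fun i => x i ≠ 0) := by simp [hk]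
    have := Finset.card_pos.mpr ⟨k, this⟩
    omega
  | succ c ih =>
    intro x hx hc k hk
    by_cases hcase : ∃ j : Fin (2*m+1), j ≠ k ∧ x j ≠ 0
    · obtain ⟨j, hjk, hj⟩ := hcase
      set y : EuclideanSpace ℂ (Fin (2*m+1)) :=
        (2*(m:ℂ)) • (p0 m x + p1 m x) - ((dvN m j.val : ℕ) : ℂ) • x with hy
      have hyK : y ∈ K := by
        apply Submodule.sub_mem
        · exact Submodule.smul_mem _ _ (Submodule.add_mem _ (hK0 x hx) (hK1 x hx))
        · exact Submodule.smul_mem _ _ hx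
      have hyval : ∀ i : Fin (2*m+1), y i = (((dvN m i.val : ℕ) : ℂ) - ((dvN m j.val : ℕ) : ℂ)) * x i := by
        intro i
        have : y i = (2*(m:ℂ)) * (p0 m x i + p1 m x i) - ((dvN m j.val : ℕ) : ℂ) * x i := rfl
        rw [this, diag_eval m hm x i]
        ring
      have hyj : y j = 0 := by rw [hyval]; simp
      have hyk : y k ≠ 0 := by
        rw [hyval]
        apply mul_ne_zero _ hk
        rw [sub_ne_zero]
        intro hcon
        have := Nat.cast_inj (R := ℂ) |>.mp hcon
        have hkj := dvN_inj m (by omega) (by omega) this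
        exact hjk (Fin.ext hkj.symm)
      have hsub : Finset.univ.filter (fun i => y i ≠ 0) ⊆
          (Finset.univ.filter (fun i => x i ≠ 0)).erase j := by
        intro i hi
        simp only [Finset.mem_filter, Finset.mem_univ, true_and] at hi
        rw [Finset.mem_erase]
        constructor
        · intro hij; subst hij; exact hi (hyj)
        · simp only [Finset.mem_filter, Finset.mem_univ, true_and]
          intro hxi
          apply hi
          rw [hyval, hxi, mul_zero]
      have hcard : (Finset.univ.filter (fun i => y i ≠ 0)).card ≤ c := by
        have h1 := Finset.card_le_card hsub
        have hjmem : j ∈ Finset.univ.filter (fun i => x i ≠ 0) := by simp [hj]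
        have h2 := Finset.card_erase_of_mem hjmem
        omega
      exact ih y hyK hcard k hyk
    · push_neg at hcase
      have hxeq : x = x k • EuclideanSpace.single k (1:ℂ) := by
        refine euclid_ext fun i => ?_
        rcases eq_or_ne i k with rfl | hik
        · simp [EuclideanSpace.single_apply]
        · have : x i = 0 := hcase i hik
          simp [EuclideanSpace.single_apply, hik, this]
      have hkey : EuclideanSpace.single k (1:ℂ) = (x k)⁻¹ • x := by
        calc EuclideanSpace.single k (1:ℂ)
            = (x k)⁻¹ • (x k • EuclideanSpace.single k (1:ℂ)) := by
              rw [smul_smul, inv_mul_cancel₀ hk, one_smul]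
          _ = (x k)⁻¹ • x := by rw [← hxeq]
      rw [hkey]
      exact Submodule.smul_mem _ _ hx
end irr

lemma Xv_single (m : ℕ) (a : Fin (2*m+1)) (k : ℕ) :
    Xv m (EuclideanSpace.single a (1:ℂ)) k = if k = a.val then 1 else 0 := by
  unfold Xv
  split_ifs with h1 h2 h2
  · rw [EuclideanSpace.single_apply, if_pos (Fin.ext h2)]
  · rw [EuclideanSpace.single_apply, if_neg (fun hc => h2 (Fin.ext_iff.mp hc))]
  · exact absurd (h2 ▸ a.isLt) h1
  · rfl

section steps
variable (m : ℕ) (hm : 1 ≤ m) (K : Submodule ℂ (EuclideanSpace ℂ (Fin (2*m+1))))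
variable (hK0 : ∀ x ∈ K, p0 m x ∈ K) (hK1 : ∀ x ∈ K, p1 m x ∈ K) (hK2 : ∀ x ∈ K, p2 m x ∈ K)

include hm hK0 hK1 hK2 in
lemma step_up (l : ℕ) (hl : l < 2*m)
    (h : EuclideanSpace.single (⟨l, by omega⟩ : Fin (2*m+1)) (1:ℂ) ∈ K) :
    EuclideanSpace.single (⟨l+1, by omega⟩ : Fin (2*m+1)) (1:ℂ) ∈ K := by
  rcases Nat.even_or_odd l with ⟨j, hj⟩ | ⟨j, hj⟩
  · -- l = 2j even : use p0
    set y := p0 m (EuclideanSpace.single (⟨l, by omega⟩ : Fin (2*m+1)) (1:ℂ)) with hy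
    have hyK : y ∈ K := hK0 _ h
    have hval : y ⟨l+1, by omega⟩ ≠ 0 := by
      have e : y ⟨l+1, by omega⟩
          = blkF m 0 (cA m) (sA m) (Xv m (EuclideanSpace.single (⟨l, by omega⟩ : Fin (2*m+1)) (1:ℂ))) (l+1) := rfl
      rw [e, blkF_eval2 (j := j) _ _ _ (by omega) (by omega) (by omega),
        Xv_single, Xv_single]
      rw [if_pos (by omega : l+1-1 = l), if_neg (by omega : ¬ (l+1 = l))]
      simp only [mul_zero, add_zero, mul_one]
      exact mul_ne_zero (Complex.ofReal_ne_zero.mpr (ne_of_gt (sA_pos (by omega) (by omega))))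
        (Complex.ofReal_ne_zero.mpr (ne_of_gt (cA_pos (by omega) (by omega))))
    exact extract m hm K hK0 hK1 _ y hyK (le_refl _) _ hval
  · -- l = 2j+1 odd : use p2
    set y := p2 m (EuclideanSpace.single (⟨l, by omega⟩ : Fin (2*m+1)) (1:ℂ)) with hy
    have hyK : y ∈ K := hK2 _ h
    have hval : y ⟨l+1, by omega⟩ ≠ 0 := by
      have e : y ⟨l+1, by omega⟩
          = blkF m 1 (cB m) (sB m) (Xv m (EuclideanSpace.single (⟨l, by omega⟩ : Fin (2*m+1)) (1:ℂ))) (l+1) := rfl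
      rw [e, blkF_eval2 (j := j) _ _ _ (by omega) (by omega) (by omega),
        Xv_single, Xv_single]
      rw [if_pos (by omega : l+1-1 = l), if_neg (by omega : ¬ (l+1 = l))]
      simp only [mul_zero, add_zero, mul_one]
      exact mul_ne_zero (Complex.ofReal_ne_zero.mpr (ne_of_gt (sB_pos (by omega) (by omega))))
        (Complex.ofReal_ne_zero.mpr (ne_of_gt (cB_pos (by omega) (by omega))))
    exact extract m hm K hK0 hK1 _ y hyK (le_refl _) _ hval

include hm hK0 hK1 hK2 in
lemma step_down (l : ℕ) (hl : l < 2*m)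
    (h : EuclideanSpace.single (⟨l+1, by omega⟩ : Fin (2*m+1)) (1:ℂ) ∈ K) :
    EuclideanSpace.single (⟨l, by omega⟩ : Fin (2*m+1)) (1:ℂ) ∈ K := by
  rcases Nat.even_or_odd l with ⟨j, hj⟩ | ⟨j, hj⟩
  · set y := p0 m (EuclideanSpace.single (⟨l+1, by omega⟩ : Fin (2*m+1)) (1:ℂ)) with hy
    have hyK : y ∈ K := hK0 _ h
    have hval : y ⟨l, by omega⟩ ≠ 0 := by
      have e : y ⟨l, by omega⟩
          = blkF m 0 (cA m) (sA m) (Xv m (EuclideanSpace.single (⟨l+1, by omega⟩ : Fin (2*m+1)) (1:ℂ))) l := rfl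
      rw [e, blkF_eval1 (j := j) _ _ _ (by omega) (by omega) (by omega),
        Xv_single, Xv_single]
      rw [if_neg (by omega : ¬ (l = l+1)), if_pos (rfl : l+1 = l+1)]
      simp only [mul_zero, zero_add, mul_one]
      exact mul_ne_zero (Complex.ofReal_ne_zero.mpr (ne_of_gt (cA_pos (by omega) (by omega))))
        (Complex.ofReal_ne_zero.mpr (ne_of_gt (sA_pos (by omega) (by omega))))
    exact extract m hm K hK0 hK1 _ y hyK (le_refl _) _ hval
  · set y := p2 m (EuclideanSpace.single (⟨l+1, by omega⟩ : Fin (2*m+1)) (1:ℂ)) with hy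
    have hyK : y ∈ K := hK2 _ h
    have hval : y ⟨l, by omega⟩ ≠ 0 := by
      have e : y ⟨l, by omega⟩
          = blkF m 1 (cB m) (sB m) (Xv m (EuclideanSpace.single (⟨l+1, by omega⟩ : Fin (2*m+1)) (1:ℂ))) l := rfl
      rw [e, blkF_eval1 (j := j) _ _ _ (by omega) (by omega) (by omega),
        Xv_single, Xv_single]
      rw [if_neg (by omega : ¬ (l = l+1)), if_pos (rfl : l+1 = l+1)]
      simp only [mul_zero, zero_add, mul_one]
      exact mul_ne_zero (Complex.ofReal_ne_zero.mpr (ne_of_gt (cB_pos (by omega) (by omega))))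
        (Complex.ofReal_ne_zero.mpr (ne_of_gt (sB_pos (by omega) (by omega))))
    exact extract m hm K hK0 hK1 _ y hyK (le_refl _) _ hval

include hm hK0 hK1 hK2 in
lemma all_singles (k0 : Fin (2*m+1))
    (h : EuclideanSpace.single k0 (1:ℂ) ∈ K) :
    ∀ i : Fin (2*m+1), EuclideanSpace.single i (1:ℂ) ∈ K := by
  have down : ∀ t : ℕ, ∀ ht : t < 2*m+1,
      EuclideanSpace.single (⟨t, ht⟩ : Fin (2*m+1)) (1:ℂ) ∈ K →
      EuclideanSpace.single (⟨0, by omega⟩ : Fin (2*m+1)) (1:ℂ) ∈ K := by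
    intro t
    induction t with
    | zero => intro ht hh; exact hh
    | succ t ih =>
      intro ht hh
      exact ih (by omega) (step_down m hm K hK0 hK1 hK2 t (by omega) hh)
  have up : ∀ t : ℕ, ∀ ht : t < 2*m+1,
      EuclideanSpace.single (⟨t, ht⟩ : Fin (2*m+1)) (1:ℂ) ∈ K := by
    intro t
    induction t with
    | zero =>
      intro ht
      have hk0 : k0 = ⟨k0.val, k0.isLt⟩ := rfl
      exact down k0.val k0.isLt (by rw [← hk0]; exact h)
    | succ t ih =>
      intro ht
      exact step_up m hm K hK0 hK1 hK2 t (by omega) (ih (by omega))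
  intro i
  have : i = ⟨i.val, i.isLt⟩ := rfl
  rw [this]
  exact up i.val i.isLt
end steps

lemma apply_sum {ι : Type*} (m : ℕ) (s : Finset ι) (f : ι → EuclideanSpace ℂ (Fin (2*m+1)))
    (a : Fin (2*m+1)) : (∑ i ∈ s, f i) a = ∑ i ∈ s, f i a := by
  classical
  induction s using Finset.induction with
  | empty => rfl
  | insert _ _ hnot ih =>
    rw [Finset.sum_insert hnot, Finset.sum_insert hnot, ← ih]
    rfl

lemma vec_decomp (m : ℕ) (v : EuclideanSpace ℂ (Fin (2*m+1))) :
    v = ∑ i : Fin (2*m+1), v i • EuclideanSpace.single i (1:ℂ) := by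
  refine euclid_ext fun a => ?_
  rw [apply_sum]
  have : ∀ i : Fin (2*m+1), (v i • EuclideanSpace.single i (1:ℂ)) a
      = v i * (if a = i then 1 else 0) := by
    intro i
    have h1 : (v i • EuclideanSpace.single i (1:ℂ)) a = v i * (EuclideanSpace.single i (1:ℂ)) a := rfl
    rw [h1, EuclideanSpace.single_apply]
  simp only [this]
  rw [Finset.sum_eq_single a]
  · simp
  · intro b _ hb
    rw [if_neg (fun hc => hb hc.symm), mul_zero]
  · intro ha; exact absurd (Finset.mem_univ a) ha

lemma irr (m : ℕ) (hm : 1 ≤ m) (K : Submodule ℂ (EuclideanSpace ℂ (Fin (2*m+1))))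
    (hKP : ∀ i : Fin 6, ∀ x ∈ K, PP m i x ∈ K) : K = ⊥ ∨ K = ⊤ := by
  have hK0 : ∀ x ∈ K, p0 m x ∈ K := fun x hx => by simpa [PP] using hKP 0 x hx
  have hK1 : ∀ x ∈ K, p1 m x ∈ K := fun x hx => by simpa [PP] using hKP 1 x hx
  have hK2 : ∀ x ∈ K, p2 m x ∈ K := fun x hx => by simpa [PP] using hKP 2 x hx
  by_cases hbot : K = ⊥
  · exact Or.inl hbot
  right
  obtain ⟨x, hxK, hx0⟩ := Submodule.ne_bot_iff K |>.mp hbot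
  obtain ⟨k, hk⟩ : ∃ k : Fin (2*m+1), x k ≠ 0 := by
    by_contra hc
    push_neg at hc
    exact hx0 (euclid_ext fun i => by rw [hc i]; rfl)
  have hsingle := extract m hm K hK0 hK1 _ x hxK (le_refl _) k hk
  have halls := all_singles m hm K hK0 hK1 hK2 k hsingle
  rw [Submodule.eq_top_iff']
  intro v
  rw [vec_decomp m v]
  exact Submodule.sum_mem _ (fun i _ => Submodule.smul_mem _ _ (halls i))


section ess
variable (m : ℕ) (hm : 1 ≤ m)

-- coordinate values on basis vectors
include hm in
lemma ev_p0 : p0 m (EuclideanSpace.single (⟨0, by omega⟩ : Fin (2*m+1)) (1:ℂ)) ⟨0, by omega⟩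
    = ((cA m 0 : ℝ) : ℂ) * ((cA m 0 : ℝ) : ℂ) := by
  have e0 : p0 m (EuclideanSpace.single (⟨0, by omega⟩ : Fin (2*m+1)) (1:ℂ)) ⟨0, by omega⟩
      = blkF m 0 (cA m) (sA m) (Xv m (EuclideanSpace.single (⟨0, by omega⟩ : Fin (2*m+1)) (1:ℂ))) 0 := rfl
  rw [e0, blkF_eval1 (j := 0) _ _ _ (by omega) (by omega) (by omega), Xv_single, Xv_single]
  norm_num

include hm in
lemma ev_p1 : p1 m (EuclideanSpace.single (⟨0, by omega⟩ : Fin (2*m+1)) (1:ℂ)) ⟨0, by omega⟩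
    = ((cA m 0 : ℝ) : ℂ) * ((cA m 0 : ℝ) : ℂ) := by
  have e0 : p1 m (EuclideanSpace.single (⟨0, by omega⟩ : Fin (2*m+1)) (1:ℂ)) ⟨0, by omega⟩
      = blkF m 0 (cA m) (fun j => -(sA m j)) (Xv m (EuclideanSpace.single (⟨0, by omega⟩ : Fin (2*m+1)) (1:ℂ))) 0 := rfl
  rw [e0, blkF_eval1 (j := 0) _ _ _ (by omega) (by omega) (by omega), Xv_single, Xv_single]
  norm_num

include hm in
lemma ev_p2 : p2 m (EuclideanSpace.single (⟨1, by omega⟩ : Fin (2*m+1)) (1:ℂ)) ⟨1, by omega⟩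
    = ((cB m 0 : ℝ) : ℂ) * ((cB m 0 : ℝ) : ℂ) := by
  have e0 : p2 m (EuclideanSpace.single (⟨1, by omega⟩ : Fin (2*m+1)) (1:ℂ)) ⟨1, by omega⟩
      = blkF m 1 (cB m) (sB m) (Xv m (EuclideanSpace.single (⟨1, by omega⟩ : Fin (2*m+1)) (1:ℂ))) 1 := rfl
  rw [e0, blkF_eval1 (j := 0) _ _ _ (by omega) (by omega) (by omega), Xv_single, Xv_single]
  norm_num

include hm in
lemma ev_p3 : p3 m (EuclideanSpace.single (⟨1, by omega⟩ : Fin (2*m+1)) (1:ℂ)) ⟨1, by omega⟩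
    = ((cB m 0 : ℝ) : ℂ) * ((cB m 0 : ℝ) : ℂ) := by
  have e0 : p3 m (EuclideanSpace.single (⟨1, by omega⟩ : Fin (2*m+1)) (1:ℂ)) ⟨1, by omega⟩
      = blkF m 1 (cB m) (fun j => -(sB m j)) (Xv m (EuclideanSpace.single (⟨1, by omega⟩ : Fin (2*m+1)) (1:ℂ))) 1 := rfl
  rw [e0, blkF_eval1 (j := 0) _ _ _ (by omega) (by omega) (by omega), Xv_single, Xv_single]
  norm_num

include hm in
lemma ev_p4a : p4 m (EuclideanSpace.single (⟨0, by omega⟩ : Fin (2*m+1)) (1:ℂ)) ⟨0, by omega⟩ = 1 := by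
  have e0 : p4 m (EuclideanSpace.single (⟨0, by omega⟩ : Fin (2*m+1)) (1:ℂ)) ⟨0, by omega⟩
      = bandF 0 (2*m) (Xv m (EuclideanSpace.single (⟨0, by omega⟩ : Fin (2*m+1)) (1:ℂ))) 0 := rfl
  rw [e0, bandF]
  rw [if_pos (by omega : 0 ≤ 0 ∧ 0 < 2*m), Xv_single, if_pos rfl]

lemma ev_p4b : p4 m (EuclideanSpace.single (⟨2*m, by omega⟩ : Fin (2*m+1)) (1:ℂ)) ⟨2*m, by omega⟩ = 0 := by
  have e0 : p4 m (EuclideanSpace.single (⟨2*m, by omega⟩ : Fin (2*m+1)) (1:ℂ)) ⟨2*m, by omega⟩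
      = bandF 0 (2*m) (Xv m (EuclideanSpace.single (⟨2*m, by omega⟩ : Fin (2*m+1)) (1:ℂ))) (2*m) := rfl
  rw [e0, bandF]
  rw [if_neg (by omega)]

include hm in
lemma ev_p5a : p5 m (EuclideanSpace.single (⟨1, by omega⟩ : Fin (2*m+1)) (1:ℂ)) ⟨1, by omega⟩ = 1 := by
  have e0 : p5 m (EuclideanSpace.single (⟨1, by omega⟩ : Fin (2*m+1)) (1:ℂ)) ⟨1, by omega⟩
      = bandF 1 (2*m+1) (Xv m (EuclideanSpace.single (⟨1, by omega⟩ : Fin (2*m+1)) (1:ℂ))) 1 := rfl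
  rw [e0, bandF]
  rw [if_pos (by omega : 1 ≤ 1 ∧ 1 < 2*m+1), Xv_single, if_pos rfl]

lemma ev_p5b : p5 m (EuclideanSpace.single (⟨0, by omega⟩ : Fin (2*m+1)) (1:ℂ)) ⟨0, by omega⟩ = 0 := by
  have e0 : p5 m (EuclideanSpace.single (⟨0, by omega⟩ : Fin (2*m+1)) (1:ℂ)) ⟨0, by omega⟩
      = bandF 1 (2*m+1) (Xv m (EuclideanSpace.single (⟨0, by omega⟩ : Fin (2*m+1)) (1:ℂ))) 0 := rfl
  rw [e0, bandF]
  rw [if_neg (by omega)]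

include hm in
lemma cA0_ne0 : ((cA m 0 : ℝ) : ℂ) * ((cA m 0 : ℝ) : ℂ) ≠ 0 :=
  mul_ne_zero (Complex.ofReal_ne_zero.mpr (ne_of_gt (cA_pos hm (by omega))))
    (Complex.ofReal_ne_zero.mpr (ne_of_gt (cA_pos hm (by omega))))

include hm in
lemma cB0_ne0 : ((cB m 0 : ℝ) : ℂ) * ((cB m 0 : ℝ) : ℂ) ≠ 0 :=
  mul_ne_zero (Complex.ofReal_ne_zero.mpr (ne_of_gt (cB_pos hm (by omega))))
    (Complex.ofReal_ne_zero.mpr (ne_of_gt (cB_pos hm (by omega))))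

include hm in
lemma cA0_ne1 : ((cA m 0 : ℝ) : ℂ) * ((cA m 0 : ℝ) : ℂ) ≠ 1 := by
  rw [← Complex.ofReal_mul, ← Complex.ofReal_one, Ne, Complex.ofReal_inj]
  have h := cA_sq (m := m) (j := 0) hm (by omega)
  rw [pow_two] at h
  rw [h]
  have hm' : (1:ℝ) ≤ m := by exact_mod_cast hm
  intro hc
  rw [div_eq_one_iff_eq (by nlinarith)] at hc
  nlinarith

include hm in
lemma cB0_ne1 : ((cB m 0 : ℝ) : ℂ) * ((cB m 0 : ℝ) : ℂ) ≠ 1 := by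
  rw [← Complex.ofReal_mul, ← Complex.ofReal_one, Ne, Complex.ofReal_inj]
  have h := cB_sq (m := m) (j := 0) hm (by omega)
  rw [pow_two] at h
  rw [h]
  have hm' : (1:ℝ) ≤ m := by exact_mod_cast hm
  intro hc
  rw [div_eq_one_iff_eq (by nlinarith)] at hc
  nlinarith

end ess

theorem main (m : ℕ) (hm : 1 ≤ m) :
    ∃ α : Fin 6 → ℝ, (∀ i, 0 < α i ∧ α i < 1) ∧
    Module.finrank ℂ (EuclideanSpace ℂ (Fin (2 * m + 1))) = 2 * m + 1 ∧
    ∃ P : Fin 6 → EuclideanSpace ℂ (Fin (2 * m + 1)) →L[ℂ] EuclideanSpace ℂ (Fin (2 * m + 1)),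
      (∀ i, IsSelfAdjoint (P i) ∧ P i ∘L P i = P i) ∧
      P 0 ∘L P 4 = P 0 ∧ P 1 ∘L P 4 = P 1 ∧ P 2 ∘L P 5 = P 2 ∧ P 3 ∘L P 5 = P 3 ∧
      (∑ i, (α i : ℂ) • P i = 1) ∧
      (∀ K : Submodule ℂ (EuclideanSpace ℂ (Fin (2 * m + 1))),
        IsClosed (K : Set (EuclideanSpace ℂ (Fin (2 * m + 1)))) →
        (∀ i, ∀ x ∈ K, P i x ∈ K) → K = ⊥ ∨ K = ⊤) ∧
      (∀ i, P i ≠ 0 ∧ P i ≠ 1) ∧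
      P 0 ≠ P 4 ∧ P 1 ≠ P 4 ∧ P 2 ≠ P 5 ∧ P 3 ≠ P 5 := by
  have hm' : (1:ℝ) ≤ m := by exact_mod_cast hm
  refine ⟨![1/2, 1/2, 1/2, 1/2, 1/(4*(m:ℝ)), 1/(4*(m:ℝ))], ?_, finrank_euclideanSpace_fin, PP m,
    ?_, ?_, ?_, ?_, ?_, ?_, ?_, ?_, ?_, ?_, ?_, ?_⟩
  · intro i
    have hinv : ((m:ℝ))⁻¹ ≤ 1 := inv_le_one_of_one_le₀ hm'
    have h0 : (0:ℝ) < m := by linarith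
    fin_cases i <;> constructor <;> norm_num <;> linarith [inv_pos.mpr h0]
  · intro i
    fin_cases i
    · exact ⟨p0_sa m, p0_idem m⟩
    · exact ⟨p1_sa m, p1_idem m⟩
    · exact ⟨p2_sa m, p2_idem m⟩
    · exact ⟨p3_sa m, p3_idem m⟩
    · exact ⟨p4_sa m, p4_idem m⟩
    · exact ⟨p5_sa m, p5_idem m⟩
  · exact p0_p4 m
  · exact p1_p4 m
  · exact p2_p5 m
  · exact p3_p5 m
  · rw [Fin.sum_univ_six]
    show ((1/2 : ℝ) : ℂ) • p0 m + ((1/2 : ℝ) : ℂ) • p1 m + ((1/2 : ℝ) : ℂ) • p2 m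
      + ((1/2 : ℝ) : ℂ) • p3 m + ((1/(4*(m:ℝ)) : ℝ) : ℂ) • p4 m
      + ((1/(4*(m:ℝ)) : ℝ) : ℂ) • p5 m = 1
    exact sum_id m hm
  · intro K _ hKP
    exact irr m hm K hKP
  · intro i
    fin_cases i
    · constructor
      · intro h
        have := congrArg (fun (T : EuclideanSpace ℂ (Fin (2*m+1)) →L[ℂ] EuclideanSpace ℂ (Fin (2*m+1))) =>
          T (EuclideanSpace.single (⟨0, by omega⟩ : Fin (2*m+1)) (1:ℂ)) ⟨0, by omega⟩) (show p0 m = 0 from h)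
        simp only [ev_p0 m hm, ContinuousLinearMap.zero_apply] at this
        exact cA0_ne0 m hm (by simpa using this)
      · intro h
        have := congrArg (fun (T : EuclideanSpace ℂ (Fin (2*m+1)) →L[ℂ] EuclideanSpace ℂ (Fin (2*m+1))) =>
          T (EuclideanSpace.single (⟨0, by omega⟩ : Fin (2*m+1)) (1:ℂ)) ⟨0, by omega⟩) (show p0 m = 1 from h)
        simp only [ev_p0 m hm, ContinuousLinearMap.one_apply, EuclideanSpace.single_apply] at this
        exact cA0_ne1 m hm (by simpa using this)
    · constructor
      · intro h
        have := congrArg (fun (T : EuclideanSpace ℂ (Fin (2*m+1)) →L[ℂ] EuclideanSpace ℂ (Fin (2*m+1))) =>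
          T (EuclideanSpace.single (⟨0, by omega⟩ : Fin (2*m+1)) (1:ℂ)) ⟨0, by omega⟩) (show p1 m = 0 from h)
        simp only [ev_p1 m hm, ContinuousLinearMap.zero_apply] at this
        exact cA0_ne0 m hm (by simpa using this)
      · intro h
        have := congrArg (fun (T : EuclideanSpace ℂ (Fin (2*m+1)) →L[ℂ] EuclideanSpace ℂ (Fin (2*m+1))) =>
          T (EuclideanSpace.single (⟨0, by omega⟩ : Fin (2*m+1)) (1:ℂ)) ⟨0, by omega⟩) (show p1 m = 1 from h)
        simp only [ev_p1 m hm, ContinuousLinearMap.one_apply, EuclideanSpace.single_apply] at this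
        exact cA0_ne1 m hm (by simpa using this)
    · constructor
      · intro h
        have := congrArg (fun (T : EuclideanSpace ℂ (Fin (2*m+1)) →L[ℂ] EuclideanSpace ℂ (Fin (2*m+1))) =>
          T (EuclideanSpace.single (⟨1, by omega⟩ : Fin (2*m+1)) (1:ℂ)) ⟨1, by omega⟩) (show p2 m = 0 from h)
        simp only [ev_p2 m hm, ContinuousLinearMap.zero_apply] at this
        exact cB0_ne0 m hm (by simpa using this)
      · intro h
        have := congrArg (fun (T : EuclideanSpace ℂ (Fin (2*m+1)) →L[ℂ] EuclideanSpace ℂ (Fin (2*m+1))) =>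
          T (EuclideanSpace.single (⟨1, by omega⟩ : Fin (2*m+1)) (1:ℂ)) ⟨1, by omega⟩) (show p2 m = 1 from h)
        simp only [ev_p2 m hm, ContinuousLinearMap.one_apply, EuclideanSpace.single_apply] at this
        exact cB0_ne1 m hm (by simpa using this)
    · constructor
      · intro h
        have := congrArg (fun (T : EuclideanSpace ℂ (Fin (2*m+1)) →L[ℂ] EuclideanSpace ℂ (Fin (2*m+1))) =>
          T (EuclideanSpace.single (⟨1, by omega⟩ : Fin (2*m+1)) (1:ℂ)) ⟨1, by omega⟩) (show p3 m = 0 from h)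
        simp only [ev_p3 m hm, ContinuousLinearMap.zero_apply] at this
        exact cB0_ne0 m hm (by simpa using this)
      · intro h
        have := congrArg (fun (T : EuclideanSpace ℂ (Fin (2*m+1)) →L[ℂ] EuclideanSpace ℂ (Fin (2*m+1))) =>
          T (EuclideanSpace.single (⟨1, by omega⟩ : Fin (2*m+1)) (1:ℂ)) ⟨1, by omega⟩) (show p3 m = 1 from h)
        simp only [ev_p3 m hm, ContinuousLinearMap.one_apply, EuclideanSpace.single_apply] at this
        exact cB0_ne1 m hm (by simpa using this)
    · constructor
      · intro h
        have := congrArg (fun (T : EuclideanSpace ℂ (Fin (2*m+1)) →L[ℂ] EuclideanSpace ℂ (Fin (2*m+1))) =>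
          T (EuclideanSpace.single (⟨0, by omega⟩ : Fin (2*m+1)) (1:ℂ)) ⟨0, by omega⟩) (show p4 m = 0 from h)
        simp only [ev_p4a m hm, ContinuousLinearMap.zero_apply] at this
        simpa using this
      · intro h
        have := congrArg (fun (T : EuclideanSpace ℂ (Fin (2*m+1)) →L[ℂ] EuclideanSpace ℂ (Fin (2*m+1))) =>
          T (EuclideanSpace.single (⟨2*m, by omega⟩ : Fin (2*m+1)) (1:ℂ)) ⟨2*m, by omega⟩) (show p4 m = 1 from h)
        simp only [ev_p4b m, ContinuousLinearMap.one_apply, EuclideanSpace.single_apply] at this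
        simp at this
    · constructor
      · intro h
        have := congrArg (fun (T : EuclideanSpace ℂ (Fin (2*m+1)) →L[ℂ] EuclideanSpace ℂ (Fin (2*m+1))) =>
          T (EuclideanSpace.single (⟨1, by omega⟩ : Fin (2*m+1)) (1:ℂ)) ⟨1, by omega⟩) (show p5 m = 0 from h)
        simp only [ev_p5a m hm, ContinuousLinearMap.zero_apply] at this
        simpa using this
      · intro h
        have := congrArg (fun (T : EuclideanSpace ℂ (Fin (2*m+1)) →L[ℂ] EuclideanSpace ℂ (Fin (2*m+1))) =>
          T (EuclideanSpace.single (⟨0, by omega⟩ : Fin (2*m+1)) (1:ℂ)) ⟨0, by omega⟩) (show p5 m = 1 from h)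
        dsimp only at this
        rw [ev_p5b m hm] at this
        simp only [ContinuousLinearMap.one_apply, EuclideanSpace.single_apply] at this
        simp at this
  · intro h
    have := congrArg (fun (T : EuclideanSpace ℂ (Fin (2*m+1)) →L[ℂ] EuclideanSpace ℂ (Fin (2*m+1))) =>
      T (EuclideanSpace.single (⟨0, by omega⟩ : Fin (2*m+1)) (1:ℂ)) ⟨0, by omega⟩) (show p0 m = p4 m from h)
    simp only [ev_p0 m hm, ev_p4a m hm] at this
    exact cA0_ne1 m hm this
  · intro h
    have := congrArg (fun (T : EuclideanSpace ℂ (Fin (2*m+1)) →L[ℂ] EuclideanSpace ℂ (Fin (2*m+1))) =>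
      T (EuclideanSpace.single (⟨0, by omega⟩ : Fin (2*m+1)) (1:ℂ)) ⟨0, by omega⟩) (show p1 m = p4 m from h)
    simp only [ev_p1 m hm, ev_p4a m hm] at this
    exact cA0_ne1 m hm this
  · intro h
    have := congrArg (fun (T : EuclideanSpace ℂ (Fin (2*m+1)) →L[ℂ] EuclideanSpace ℂ (Fin (2*m+1))) =>
      T (EuclideanSpace.single (⟨1, by omega⟩ : Fin (2*m+1)) (1:ℂ)) ⟨1, by omega⟩) (show p2 m = p5 m from h)
    simp only [ev_p2 m hm, ev_p5a m hm] at this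
    exact cB0_ne1 m hm this
  · intro h
    have := congrArg (fun (T : EuclideanSpace ℂ (Fin (2*m+1)) →L[ℂ] EuclideanSpace ℂ (Fin (2*m+1))) =>
      T (EuclideanSpace.single (⟨1, by omega⟩ : Fin (2*m+1)) (1:ℂ)) ⟨1, by omega⟩) (show p3 m = p5 m from h)
    simp only [ev_p3 m hm, ev_p5a m hm] at this
    exact cB0_ne1 m hm this

end Stmt17



/-- For every `m ≥ 1` the poset `a₄` (elements `g₁, …, g₆` with
`g₁ < g₅`, `g₂ < g₅`, `g₃ < g₆`, `g₄ < g₆`) admits an essential irreducible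
orthoscalar representation, with some character taking values in `(0,1)`, on a
complex Hilbert space of dimension `2m + 1`.
(Indices: `P 0, …, P 5` stand for `P₁, …, P₆`.) -/
theorem stmt_17 (m : ℕ) (hm : 1 ≤ m) :
    ∃ α : Fin 6 → ℝ, (∀ i, 0 < α i ∧ α i < 1) ∧
    Module.finrank ℂ (EuclideanSpace ℂ (Fin (2 * m + 1))) = 2 * m + 1 ∧
    ∃ P : Fin 6 → EuclideanSpace ℂ (Fin (2 * m + 1)) →L[ℂ] EuclideanSpace ℂ (Fin (2 * m + 1)),
      (∀ i, IsSelfAdjoint (P i) ∧ P i ∘L P i = P i) ∧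
      P 0 ∘L P 4 = P 0 ∧ P 1 ∘L P 4 = P 1 ∧ P 2 ∘L P 5 = P 2 ∧ P 3 ∘L P 5 = P 3 ∧
      (∑ i, (α i : ℂ) • P i = 1) ∧
      (∀ K : Submodule ℂ (EuclideanSpace ℂ (Fin (2 * m + 1))),
        IsClosed (K : Set (EuclideanSpace ℂ (Fin (2 * m + 1)))) →
        (∀ i, ∀ x ∈ K, P i x ∈ K) → K = ⊥ ∨ K = ⊤) ∧
      (∀ i, P i ≠ 0 ∧ P i ≠ 1) ∧
      P 0 ≠ P 4 ∧ P 1 ≠ P 4 ∧ P 2 ≠ P 5 ∧ P 3 ≠ P 5 := by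
  exact Stmt17.main m hm
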